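/- If (I, R) is an ideal torsion pair in a triangulated category T, then I is contravariantly finite (every object has a right I-approximation) and R is covariantly finite (every object has a left R-approximation). -/

import Mathlib

open CategoryTheory CategoryTheory.Limits CategoryTheory.Pretriangulated

universe v u

variable {C : Type u} [Category.{v} C]

/-- An ideal of a preadditive category: an additive sub-bifunctor of `Hom(-,-)`. -/
structure CatIdeal (C : Type u) [Category.{v} C] [Preadditive C] where
  carrier : ∀ {X Y : C}, Set (X ⟶ Y)
  add_mem : ∀ {X Y : C} {f g : X ⟶ Y}, f ∈ carrier → g ∈ carrier → f + g ∈ carrier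
  zero_mem : ∀ {X Y : C}, (0 : X ⟶ Y) ∈ carrier
  neg_mem : ∀ {X Y : C} {f : X ⟶ Y}, f ∈ carrier → -f ∈ carrier
  comp_left : ∀ {X Y Z : C} (f : X ⟶ Y) {g : Y ⟶ Z}, g ∈ carrier → f ≫ g ∈ carrier
  comp_right : ∀ {X Y Z : C} {f : X ⟶ Y} (g : Y ⟶ Z), f ∈ carrier → f ≫ g ∈ carrier

variable [Preadditive C] [HasZeroObject C] [HasShift C ℤ] [∀ n : ℤ, (shiftFunctor C n).Additive] [Pretriangulated C]

/-- `(I, R)` is an ideal torsion pair: every composite `i ≫ g ≫ r` with `i ∈ I`, `r ∈ R`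
vanishes, and every object sits in a distinguished triangle `X ⟶ T₀ ⟶ Y ⟶ X[1]` with the
first morphism in `I` and the second in `R`. -/
def IsIdealTorsionPair (I R : CatIdeal C) : Prop :=
  (∀ {A B B' D : C} (i : A ⟶ B) (g : B ⟶ B') (r : B' ⟶ D),
      i ∈ I.carrier → r ∈ R.carrier → i ≫ g ≫ r = 0) ∧
  (∀ T₀ : C, ∃ (X Y : C) (f : X ⟶ T₀) (g : T₀ ⟶ Y) (h : Y ⟶ X⟦(1 : ℤ)⟧),
      Triangle.mk f g h ∈ (distTriang C) ∧ f ∈ I.carrier ∧ g ∈ R.carrier)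

/-- If `(I, R)` is an ideal torsion pair, then `I` is contravariantly finite and `R` is
covariantly finite. -/
theorem idealTorsionPair_functorially_finite (I R : CatIdeal C)
    (hIR : IsIdealTorsionPair I R) :
    (∀ T₀ : C, ∃ (X : C) (i : X ⟶ T₀), i ∈ I.carrier ∧
        ∀ {X' : C} (j : X' ⟶ T₀), j ∈ I.carrier → ∃ t : X' ⟶ X, t ≫ i = j) ∧
    (∀ T₀ : C, ∃ (Y : C) (r : T₀ ⟶ Y), r ∈ R.carrier ∧
        ∀ {Y' : C} (s : T₀ ⟶ Y'), s ∈ R.carrier → ∃ t : Y ⟶ Y', r ≫ t = s) := by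
  obtain ⟨hvan, htri⟩ := hIR
  constructor
  · intro T₀
    obtain ⟨X, Y, f, g, h, hdist, hf, hg⟩ := htri T₀
    refine ⟨X, f, hf, fun {X'} j hj => ?_⟩
    obtain ⟨t, ht⟩ := Triangle.coyoneda_exact₂ _ hdist j
      (by have := hvan j (𝟙 T₀) g hj hg; simp at this; exact this)
    exact ⟨t, ht.symm⟩
  · intro T₀
    obtain ⟨X, Y, f, g, h, hdist, hf, hg⟩ := htri T₀
    refine ⟨Y, g, hg, fun {Y'} s hs => ?_⟩
    obtain ⟨t, ht⟩ := Triangle.yoneda_exact₂ _ hdist s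
      (by have := hvan f (𝟙 T₀) s hf hs; simp at this; exact this)
    exact ⟨t, ht.symm⟩
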